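/- Define F_{A_n}(x,y) = Σ_{k,ℓ ≥ 0, k+ℓ ≤ n} [(ℓ+1)/(k+ℓ+1)] * C(n, k+ℓ) * C(n+k, n) * x^k y^ℓ as a polynomial in ℚ[x,y]. Then F_{A_n}(x,y) = (-1)^n * F_{A_n}(-1-x, -1-y). -/

import Mathlib

open Finset

lemma aux_hockey_stick (a : ℕ) : ∀ m : ℕ, ∑ j ∈ range m, Nat.choose j a = Nat.choose m (a + 1)
  | 0 => by simp
  | (m + 1) => by
      rw [Finset.sum_range_succ, aux_hockey_stick a m, Nat.choose_succ_succ']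
      omega

lemma aux_vandermonde_upper (a : ℕ) :
    ∀ (n b : ℕ), ∑ j ∈ range (n + 1), Nat.choose j a * Nat.choose (n - j) b
      = Nat.choose (n + 1) (a + b + 1)
  | 0, b => by
      match a, b with
      | 0, 0 => simp
      | 0, (b + 1) => simp [Nat.choose_eq_zero_of_lt (show 1 < b + 1 + 1 by omega),
          Nat.choose_eq_zero_of_lt (show 0 < b + 1 by omega)]
      | (a + 1), b =>
        simp [Nat.choose_eq_zero_of_lt (show (1:ℕ) < a + 1 + b + 1 by omega),
          Nat.choose_eq_zero_of_lt (show 0 < a + 1 by omega)]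
  | (n + 1), 0 => by
      simp only [Nat.choose_zero_right, Nat.mul_one]
      simpa using aux_hockey_stick a (n + 2)
  | (n + 1), (b + 1) => by
      rw [Finset.sum_range_succ]
      have h1 : ∀ j ∈ range (n + 1), Nat.choose j a * Nat.choose (n + 1 - j) (b + 1)
          = Nat.choose j a * Nat.choose (n - j) b + Nat.choose j a * Nat.choose (n - j) (b + 1) := by
        intro j hj
        rw [mem_range] at hj
        have h2 : n + 1 - j = (n - j) + 1 := by omega
        rw [h2, Nat.choose_succ_succ, Nat.mul_add]
      rw [Finset.sum_congr rfl h1, Finset.sum_add_distrib,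
        aux_vandermonde_upper a n b, aux_vandermonde_upper a n (b + 1)]
      rw [Nat.sub_self, Nat.choose_eq_zero_of_lt (show 0 < b + 1 by omega)]
      rw [show a + (b + 1) + 1 = (a + b + 1) + 1 from by omega,
        Nat.choose_succ_succ (n + 1) (a + b + 1), Nat.succ_eq_add_one]
      omega

lemma aux_sum_pascal (f : ℕ → ℚ) (N : ℕ) :
    ∑ j ∈ range (N + 2), (Nat.choose (N + 1) j : ℚ) * f j
      = ∑ j ∈ range (N + 1), (Nat.choose N j : ℚ) * (f j + f (j + 1)) := by
  rw [Finset.sum_range_succ' (fun j => (Nat.choose (N + 1) j : ℚ) * f j) (N + 1)]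
  have h1 : ∀ j ∈ range (N + 1), (Nat.choose (N + 1) (j + 1) : ℚ) * f (j + 1)
      = (Nat.choose N j : ℚ) * f (j + 1) + (Nat.choose N (j + 1) : ℚ) * f (j + 1) := by
    intro j _
    rw [Nat.choose_succ_succ N j]
    push_cast
    ring
  rw [Finset.sum_congr rfl h1, Finset.sum_add_distrib]
  have h2 : ∑ j ∈ range (N + 1), (Nat.choose N (j + 1) : ℚ) * f (j + 1)
        + (Nat.choose (N + 1) 0 : ℚ) * f 0
      = ∑ j ∈ range (N + 1), (Nat.choose N j : ℚ) * f j := by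
    have h3 : ∑ j ∈ range (N + 2), (Nat.choose N j : ℚ) * f j
        = ∑ j ∈ range (N + 1), (Nat.choose N (j + 1) : ℚ) * f (j + 1)
          + (Nat.choose N 0 : ℚ) * f 0 :=
      Finset.sum_range_succ' (fun j => (Nat.choose N j : ℚ) * f j) (N + 1)
    rw [Finset.sum_range_succ (fun j => (Nat.choose N j : ℚ) * f j) (N + 1)] at h3
    rw [Nat.choose_eq_zero_of_lt (show N < N + 1 by omega)] at h3
    simp only [Nat.choose_zero_right] at h3 ⊢
    push_cast at h3 ⊢
    linarith
  have h5 : ∑ j ∈ range (N + 1), (Nat.choose N j : ℚ) * (f j + f (j + 1))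
      = ∑ j ∈ range (N + 1), (Nat.choose N j : ℚ) * f j
        + ∑ j ∈ range (N + 1), (Nat.choose N j : ℚ) * f (j + 1) := by
    rw [← Finset.sum_add_distrib]
    exact Finset.sum_congr rfl (fun j _ => by ring)
  rw [h5]
  linarith [h2]

lemma aux_finite_diff :
    ∀ (N a b : ℕ), N ≤ b →
      ∑ j ∈ range (N + 1), (Nat.choose N j : ℚ) * ((-1) ^ j * (Nat.choose (a + j) b))
        = (-1) ^ N * (Nat.choose a (b - N))
  | 0, a, b, _ => by simp
  | (N + 1), a, b, hNb => by
      rw [aux_sum_pascal (fun j => (-1) ^ j * ((Nat.choose (a + j) b : ℚ))) N]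
      have h1 : ∀ j ∈ range (N + 1),
          (Nat.choose N j : ℚ) * ((-1) ^ j * (Nat.choose (a + j) b)
              + (-1) ^ (j + 1) * (Nat.choose (a + (j + 1)) b))
          = (Nat.choose N j : ℚ) * ((-1) ^ j * (Nat.choose (a + j) b))
            - (Nat.choose N j : ℚ) * ((-1) ^ j * (Nat.choose ((a + 1) + j) b)) := by
        intro j _
        rw [show a + (j + 1) = (a + 1) + j from by omega]
        ring
      rw [Finset.sum_congr rfl h1, Finset.sum_sub_distrib,
        aux_finite_diff N a b (by omega), aux_finite_diff N (a + 1) b (by omega)]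
      have h2 : Nat.choose (a + 1) (b - N) = Nat.choose a (b - (N + 1)) + Nat.choose a (b - N) := by
        have h3 : b - N = (b - (N + 1)) + 1 := by omega
        rw [h3, Nat.choose_succ_succ]
      rw [h2]
      push_cast
      ring

/-- Coefficients of the F-triangle in the mixed basis `x^k (1+y)^i`. -/
def ccF (n k i : ℕ) : ℚ :=
  if k = 0 then (if i = n then 1 else 0)
  else if i = n then 0
  else ((i : ℚ) + 1) / ((n : ℚ) + 1) * (Nat.choose (n + k) k) * (Nat.choose (n - 1 - i) (k - 1))

/-- Product identity `C(n+m,m) C(m,k) = C(n+k,k) C(n+m,n+k)`. -/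
lemma aux_prod_id (n m k : ℕ) :
    Nat.choose (n + m) m * Nat.choose m k = Nat.choose (n + k) k * Nat.choose (n + m) (n + k) := by
  rcases le_or_gt k m with h | h
  · rw [Nat.choose_mul h]
    rw [mul_comm (Nat.choose (n + k) k), Nat.choose_mul (Nat.le_add_left k n)]
    congr 1
    rw [show n + m - k = (m - k) + n from by omega, Nat.choose_symm_add,
      show n + k - k = n from by omega]
  · rw [Nat.choose_eq_zero_of_lt h, Nat.choose_eq_zero_of_lt (show n + m < n + k by omega)]
    ring

/-- Key identity A: expansion coefficients. -/
lemma aux_keyA (n k l : ℕ) (hl : l ≤ n) :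
    ∑ i ∈ range (n + 1), ccF n k i * (Nat.choose i l : ℚ)
      = ((l : ℚ) + 1) / ((n : ℚ) + 1) * (Nat.choose (n + 1) (k + l + 1)) * (Nat.choose (n + k) k) := by
  have hn1 : ((n : ℚ) + 1) ≠ 0 := by positivity
  rcases Nat.eq_zero_or_pos k with hk | hk
  · subst hk
    rw [Finset.sum_eq_single n]
    · simp only [ccF, if_pos rfl, if_pos rfl, one_mul]
      have h := Nat.add_one_mul_choose_eq n l
      rw [Nat.choose_zero_right, Nat.add_zero, Nat.choose_zero_right]
      have h' : ((n : ℚ) + 1) * (Nat.choose n l) = (Nat.choose (n + 1) (l + 1)) * ((l : ℚ) + 1) := by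
        exact_mod_cast congrArg (Nat.cast (R := ℚ)) h
      rw [show (0:ℕ) + l + 1 = l + 1 from by omega]
      field_simp
      simp only [if_true, Nat.cast_one]
      linarith [h']
    · intro i _ hi
      simp [ccF, hi]
    · intro h; exact absurd (mem_range.mpr (by omega)) h
  · obtain ⟨k', rfl⟩ : ∃ k', k = k' + 1 := ⟨k - 1, by omega⟩
    rw [Finset.sum_range_succ]
    rw [show ccF n (k' + 1) n = 0 from by simp [ccF]]
    rw [zero_mul, add_zero]
    have h1 : ∀ i ∈ range n, ccF n (k' + 1) i * (Nat.choose i l : ℚ)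
        = ((l : ℚ) + 1) / ((n : ℚ) + 1) * (Nat.choose (n + k' + 1) (k' + 1))
            * ((Nat.choose (i + 1) (l + 1) : ℚ) * (Nat.choose (n - 1 - i) k')) := by
      intro i hi
      rw [mem_range] at hi
      simp only [ccF, if_neg (Nat.succ_ne_zero k'), if_neg (Nat.ne_of_lt hi)]
      have h := Nat.add_one_mul_choose_eq i l
      have h' : ((i : ℚ) + 1) * (Nat.choose i l) = (Nat.choose (i + 1) (l + 1)) * ((l : ℚ) + 1) := by
        exact_mod_cast congrArg (Nat.cast (R := ℚ)) h
      rw [show n + (k' + 1) = n + k' + 1 from by omega, show k' + 1 - 1 = k' from by omega]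
      field_simp
      linear_combination ((Nat.choose (n + k' + 1) (k' + 1) : ℚ)) * ((Nat.choose (n - 1 - i) k' : ℚ)) * h'
    rw [Finset.sum_congr rfl h1, ← Finset.mul_sum]
    have h2 : ∑ i ∈ range n, ((Nat.choose (i + 1) (l + 1) : ℚ) * (Nat.choose (n - 1 - i) k'))
        = (Nat.choose (n + 1) (k' + 1 + l + 1) : ℚ) := by
      have h3 : ∑ j ∈ range (n + 1), Nat.choose j (l + 1) * Nat.choose (n - j) k'
          = Nat.choose (n + 1) (l + 1 + k' + 1) := aux_vandermonde_upper (l + 1) n k'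
      rw [Finset.sum_range_succ' (fun j => Nat.choose j (l + 1) * Nat.choose (n - j) k') n] at h3
      simp only [Nat.choose_eq_zero_of_lt (show 0 < l + 1 by omega), Nat.zero_mul, Nat.add_zero] at h3
      have h4 : ∑ i ∈ range n, Nat.choose (i + 1) (l + 1) * Nat.choose (n - (i + 1)) k'
          = ∑ i ∈ range n, Nat.choose (i + 1) (l + 1) * Nat.choose (n - 1 - i) k' := by
        refine Finset.sum_congr rfl fun i hi => ?_
        rw [mem_range] at hi
        rw [show n - (i + 1) = n - 1 - i from by omega]
      rw [h4] at h3
      rw [show k' + 1 + l + 1 = l + 1 + k' + 1 from by omega, ← h3]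
      push_cast
      rfl
    rw [h2]
    ring

/-- Key identity B. -/
lemma aux_keyB (n k l : ℕ) (hl : l ≤ n) :
    ∑ m ∈ range (n + 1), (-1 : ℚ) ^ (n + m + l) * ccF n m l * (Nat.choose m k : ℚ)
      = ((l : ℚ) + 1) / ((n : ℚ) + 1) * (Nat.choose (n + 1) (k + l + 1)) * (Nat.choose (n + k) k) := by
  have hn1 : ((n : ℚ) + 1) ≠ 0 := by positivity
  rcases eq_or_lt_of_le hl with hln | hln
  · -- l = n : only m = 0 contributes
    subst hln
    rw [Finset.sum_eq_single 0]
    · have hcc : ccF l 0 l = 1 := by simp [ccF]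
      rw [hcc]
      rcases Nat.eq_zero_or_pos k with hk | hk
      · subst hk
        simp only [Nat.choose_zero_right, Nat.add_zero, Nat.choose_self, Nat.cast_one]
        rw [show l + l = 2 * l from by omega, pow_mul, show (0:ℕ) + l + 1 = l + 1 from by omega,
          Nat.choose_self]
        norm_num
        rw [div_self hn1]
      · rw [Nat.choose_eq_zero_of_lt (show 0 < k from hk),
          Nat.choose_eq_zero_of_lt (show l + 1 < k + l + 1 from by omega)]
        push_cast
        ring
    · intro m _ hm
      simp [ccF, hm]
    · intro h; exact absurd (mem_range.mpr (by omega)) h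
  · -- l < n
    rw [Finset.sum_range_succ' (fun m => (-1 : ℚ) ^ (n + m + l) * ccF n m l * (Nat.choose m k : ℚ)) n]
    rw [show ccF n 0 l = 0 from by simp [ccF, Nat.ne_of_lt hln]]
    rw [mul_zero, zero_mul, add_zero]
    have h1 : ∀ m ∈ range n, (-1 : ℚ) ^ (n + (m + 1) + l) * ccF n (m + 1) l * (Nat.choose (m + 1) k : ℚ)
        = (-1 : ℚ) ^ (n + l + 1) * (((l : ℚ) + 1) / ((n : ℚ) + 1) * (Nat.choose (n + k) k))
            * ((Nat.choose (n - 1 - l) m : ℚ) * ((-1) ^ m * (Nat.choose ((n + 1) + m) (n + k) : ℚ))) := by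
      intro m hm
      simp only [ccF, if_neg (Nat.succ_ne_zero m), if_neg (Nat.ne_of_lt hln)]
      have hp := aux_prod_id n (m + 1) k
      have hp' : ((Nat.choose (n + (m + 1)) (m + 1) : ℚ)) * (Nat.choose (m + 1) k : ℚ)
          = (Nat.choose (n + k) k : ℚ) * (Nat.choose (n + (m + 1)) (n + k) : ℚ) := by
        exact_mod_cast congrArg (Nat.cast (R := ℚ)) hp
      rw [show m + 1 - 1 = m from by omega]
      rw [show n + (m + 1) = (n + 1) + m from by omega] at hp'
      rw [show n + (m + 1) + l = (n + l + 1) + m from by omega, pow_add]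
      rw [show n + (m + 1) = (n + 1) + m from by omega]
      field_simp
      linear_combination ((-1:ℚ)^(n+l+1) * (-1:ℚ)^m * ((l:ℚ)+1) * (Nat.choose (n - 1 - l) m : ℚ) + (Nat.choose (n - 1 - l) m : ℚ) * (1 + (-1:ℚ)^n * (-1:ℚ)^l * (-1:ℚ)^m + (l:ℚ) * ((-1:ℚ)^n * (-1:ℚ)^l * (-1:ℚ)^m))) * hp'
    rw [Finset.sum_congr rfl h1, ← Finset.mul_sum]
    have h2 : ∑ m ∈ range n, ((Nat.choose (n - 1 - l) m : ℚ) * ((-1) ^ m * (Nat.choose ((n + 1) + m) (n + k) : ℚ)))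
        = (-1 : ℚ) ^ (n - 1 - l) * (Nat.choose (n + 1) (k + l + 1) : ℚ) := by
      have h3 := aux_finite_diff (n - 1 - l) (n + 1) (n + k) (by omega)
      rw [show n + k - (n - 1 - l) = k + l + 1 from by omega] at h3
      rw [← h3]
      rw [Finset.sum_subset (Finset.range_subset_range.mpr (show (n - 1 - l) + 1 ≤ n by omega))]
      intro j _ hj
      rw [mem_range, not_lt] at hj
      rw [Nat.choose_eq_zero_of_lt (show n - 1 - l < j by omega)]
      simp
    rw [h2]
    rw [show (-1 : ℚ) ^ (n + l + 1) * (((l : ℚ) + 1) / ((n : ℚ) + 1) * (Nat.choose (n + k) k))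
        * ((-1 : ℚ) ^ (n - 1 - l) * (Nat.choose (n + 1) (k + l + 1) : ℚ))
      = ((-1 : ℚ) ^ ((n + l + 1) + (n - 1 - l))) * (((l : ℚ) + 1) / ((n : ℚ) + 1)
          * (Nat.choose (n + 1) (k + l + 1)) * (Nat.choose (n + k) k)) from by rw [pow_add]; ring]
    rw [show (n + l + 1) + (n - 1 - l) = 2 * n from by omega]
    rw [show ((-1 : ℚ) ^ (2 * n)) = 1 from by rw [pow_mul]; norm_num]
    ring

/-- Binomial expansion with extended range. -/
lemma aux_binom_ext (n i : ℕ) (hi : i ≤ n) (y : ℚ) :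
    (1 + y) ^ i = ∑ l ∈ range (n + 1), (Nat.choose i l : ℚ) * y ^ l := by
  rw [add_comm (1 : ℚ) y, add_pow]
  rw [← Finset.sum_subset (Finset.range_subset_range.mpr (show i + 1 ≤ n + 1 by omega))]
  · exact Finset.sum_congr rfl fun l _ => by rw [one_pow]; ring
  · intro l _ hl
    rw [mem_range, not_lt] at hl
    rw [Nat.choose_eq_zero_of_lt (by omega)]
    simp

/-- Expansion A : `F(x,y) = ∑ c_{k,i} x^k (1+y)^i`. -/
lemma aux_expandA (n : ℕ) (x y : ℚ) :
    ∑ k ∈ range (n + 1), ∑ l ∈ range (n + 1),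
        ((l : ℚ) + 1) / ((n : ℚ) + 1) * (Nat.choose (n + 1) (k + l + 1)) * (Nat.choose (n + k) k)
          * x ^ k * y ^ l
      = ∑ k ∈ range (n + 1), ∑ i ∈ range (n + 1), ccF n k i * x ^ k * (1 + y) ^ i := by
  refine Finset.sum_congr rfl fun k _ => ?_
  have h1 : ∀ i ∈ range (n + 1), ccF n k i * x ^ k * (1 + y) ^ i
      = ∑ l ∈ range (n + 1), ccF n k i * (Nat.choose i l : ℚ) * (x ^ k * y ^ l) := by
    intro i hi
    rw [mem_range] at hi
    rw [aux_binom_ext n i (by omega) y, Finset.mul_sum]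
    exact Finset.sum_congr rfl fun l _ => by ring
  rw [Finset.sum_congr rfl h1, Finset.sum_comm]
  refine Finset.sum_congr rfl fun l hl => ?_
  rw [mem_range] at hl
  rw [← Finset.sum_mul, aux_keyA n k l (by omega)]
  ring

/-- Expansion B : `F(x,y) = ∑ (-1)^(n+k+i) c_{k,i} (1+x)^k y^i`. -/
lemma aux_expandB (n : ℕ) (x y : ℚ) :
    ∑ k ∈ range (n + 1), ∑ l ∈ range (n + 1),
        ((l : ℚ) + 1) / ((n : ℚ) + 1) * (Nat.choose (n + 1) (k + l + 1)) * (Nat.choose (n + k) k)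
          * x ^ k * y ^ l
      = ∑ m ∈ range (n + 1), ∑ i ∈ range (n + 1),
          (-1 : ℚ) ^ (n + m + i) * ccF n m i * (1 + x) ^ m * y ^ i := by
  have h1 : ∀ m ∈ range (n + 1), ∑ i ∈ range (n + 1),
        (-1 : ℚ) ^ (n + m + i) * ccF n m i * (1 + x) ^ m * y ^ i
      = ∑ i ∈ range (n + 1), ∑ k ∈ range (n + 1),
          ((-1 : ℚ) ^ (n + m + i) * ccF n m i * (Nat.choose m k : ℚ)) * (x ^ k * y ^ i) := by
    intro m hm
    rw [mem_range] at hm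
    refine Finset.sum_congr rfl fun i _ => ?_
    rw [aux_binom_ext n m (by omega) x, Finset.mul_sum, Finset.sum_mul]
    exact Finset.sum_congr rfl fun k _ => by ring
  conv_rhs => rw [Finset.sum_congr rfl h1, Finset.sum_comm]
  have h2 : ∀ i ∈ range (n + 1), ∑ m ∈ range (n + 1), ∑ k ∈ range (n + 1),
        ((-1 : ℚ) ^ (n + m + i) * ccF n m i * (Nat.choose m k : ℚ)) * (x ^ k * y ^ i)
      = ∑ k ∈ range (n + 1),
          ((i : ℚ) + 1) / ((n : ℚ) + 1) * (Nat.choose (n + 1) (k + i + 1)) * (Nat.choose (n + k) k)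
            * x ^ k * y ^ i := by
    intro i hi
    rw [mem_range] at hi
    rw [Finset.sum_comm]
    refine Finset.sum_congr rfl fun k _ => ?_
    rw [← Finset.sum_mul, aux_keyB n k i (by omega)]
    ring
  conv_rhs => rw [Finset.sum_congr rfl h2]
  rw [Finset.sum_comm]

/-- Rewriting the F-triangle coefficient. -/
lemma aux_term_eq (n k l : ℕ) :
    ((l : ℚ) + 1) / ((k : ℚ) + (l : ℚ) + 1) * (Nat.choose n (k + l)) * (Nat.choose (n + k) n)
      = ((l : ℚ) + 1) / ((n : ℚ) + 1) * (Nat.choose (n + 1) (k + l + 1)) * (Nat.choose (n + k) k) := by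
  rw [Nat.choose_symm_add]
  have h := Nat.add_one_mul_choose_eq n (k + l)
  have h' : ((n : ℚ) + 1) * (Nat.choose n (k + l)) = (Nat.choose (n + 1) (k + l + 1)) * ((k : ℚ) + (l : ℚ) + 1) := by
    have := congrArg (Nat.cast (R := ℚ)) h
    push_cast at this
    linarith [this]
  have hkl : ((k : ℚ) + (l : ℚ) + 1) ≠ 0 := by positivity
  have hn1 : ((n : ℚ) + 1) ≠ 0 := by positivity
  field_simp
  linear_combination (Nat.choose (n + k) k : ℚ) * h'

/-- The original triangular F-sum equals the full-square normalized form. -/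
lemma aux_Fsq (n : ℕ) (x y : ℚ) :
    ∑ k ∈ range (n + 1), ∑ l ∈ range (n + 1 - k),
        ((l : ℚ) + 1) / ((k : ℚ) + (l : ℚ) + 1) * (Nat.choose n (k + l)) * (Nat.choose (n + k) n)
          * x ^ k * y ^ l
      = ∑ k ∈ range (n + 1), ∑ l ∈ range (n + 1),
          ((l : ℚ) + 1) / ((n : ℚ) + 1) * (Nat.choose (n + 1) (k + l + 1)) * (Nat.choose (n + k) k)
            * x ^ k * y ^ l := by
  refine Finset.sum_congr rfl fun k hk => ?_
  rw [mem_range] at hk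
  have h1 : ∀ l ∈ range (n + 1 - k),
      ((l : ℚ) + 1) / ((k : ℚ) + (l : ℚ) + 1) * (Nat.choose n (k + l)) * (Nat.choose (n + k) n)
          * x ^ k * y ^ l
      = ((l : ℚ) + 1) / ((n : ℚ) + 1) * (Nat.choose (n + 1) (k + l + 1)) * (Nat.choose (n + k) k)
          * x ^ k * y ^ l := by
    intro l _
    rw [aux_term_eq n k l]
  rw [Finset.sum_congr rfl h1]
  refine Finset.sum_subset (Finset.range_subset_range.mpr (by omega)) ?_
  intro l _ hl
  rw [mem_range, not_lt] at hl
  rw [Nat.choose_eq_zero_of_lt (show n + 1 < k + l + 1 by omega)]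
  simp

theorem F_triangle_A_symmetry (n : ℕ) (x y : ℚ) :
    ∑ k ∈ range (n + 1), ∑ ℓ ∈ range (n + 1 - k),
        ((ℓ + 1 : ℚ) / (k + ℓ + 1)) * (Nat.choose n (k + ℓ)) *
          (Nat.choose (n + k) n) * x ^ k * y ^ ℓ =
      (-1) ^ n *
        ∑ k ∈ range (n + 1), ∑ ℓ ∈ range (n + 1 - k),
          ((ℓ + 1 : ℚ) / (k + ℓ + 1)) * (Nat.choose n (k + ℓ)) *
            (Nat.choose (n + k) n) * (-1 - x) ^ k * (-1 - y) ^ ℓ := by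
  rw [aux_Fsq n x y, aux_Fsq n (-1 - x) (-1 - y)]
  conv_rhs => rw [aux_expandA n (-1 - x) (-1 - y)]
  rw [aux_expandB n x y]
  rw [Finset.mul_sum]
  refine Finset.sum_congr rfl fun k _ => ?_
  rw [Finset.mul_sum]
  refine Finset.sum_congr rfl fun i _ => ?_
  rw [show (-1 : ℚ) - x = (-1) * (1 + x) from by ring, mul_pow,
    show (1 : ℚ) + (-1 - y) = (-1) * y from by ring, mul_pow, pow_add, pow_add]
  ring
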